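/- Let μ and ν be two distinct positive real numbers each satisfying μ sin(2μ) = 2 cos(2μ) and ν sin(2ν) = 2 cos(2ν) (so cos μ ≠ 0 and cos ν ≠ 0). Then ∫_{−1}^{0} sin(μ(1+x)) sin(ν(1+x)) dx + tan(μ) tan(ν) ∫_{0}^{1} cos(μ(x−1)) cos(ν(x−1)) dx + sin(μ) sin(ν) = 0. -/

import Mathlib

open Real Set

lemma int_cos_aux (a : ℝ) (ha : a ≠ 0) :
    (∫ x in (-1:ℝ)..0, Real.cos (a * x + a)) = Real.sin a / a := by
  rw [intervalIntegral.integral_comp_mul_add Real.cos ha a]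
  simp [integral_cos, div_eq_inv_mul]

lemma int_cos_aux' (a : ℝ) (ha : a ≠ 0) :
    (∫ x in (0:ℝ)..1, Real.cos (a * x + -a)) = Real.sin a / a := by
  rw [intervalIntegral.integral_comp_mul_add Real.cos ha (-a)]
  simp [integral_cos, div_eq_inv_mul]

/-- Orthogonality in `H = L²(−1,0) × L²(0,1) × ℝ` of Neumann eigenvectors associated with
distinct roots of the characteristic equation `μ sin(2μ) = 2 cos(2μ)`. -/
theorem neumann_eigenvectors_orthogonal (μ ν : ℝ) (hμ : 0 < μ) (hν : 0 < ν) (hne : μ ≠ ν)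
    (hcμ : μ * Real.sin (2 * μ) = 2 * Real.cos (2 * μ))
    (hcν : ν * Real.sin (2 * ν) = 2 * Real.cos (2 * ν)) :
    (∫ x in (-1 : ℝ)..0, Real.sin (μ * (1 + x)) * Real.sin (ν * (1 + x))) +
    Real.tan μ * Real.tan ν *
      (∫ x in (0 : ℝ)..1, Real.cos (μ * (x - 1)) * Real.cos (ν * (x - 1))) +
    Real.sin μ * Real.sin ν = 0 := by
  have hd : μ - ν ≠ 0 := sub_ne_zero.mpr hne
  have hs : μ + ν ≠ 0 := by positivity
  -- cos μ ≠ 0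
  have hcosμ : Real.cos μ ≠ 0 := by
    intro h
    rw [Real.sin_two_mul, Real.cos_two_mul, h] at hcμ
    norm_num at hcμ
  have hcosν : Real.cos ν ≠ 0 := by
    intro h
    rw [Real.sin_two_mul, Real.cos_two_mul, h] at hcν
    norm_num at hcν
  have hμ' : Real.cos μ ^ 2 - Real.sin μ ^ 2 = μ * Real.sin μ * Real.cos μ := by
    rw [Real.sin_two_mul, Real.cos_two_mul'] at hcμ; nlinarith [hcμ]
  have hν' : Real.cos ν ^ 2 - Real.sin ν ^ 2 = ν * Real.sin ν * Real.cos ν := by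
    rw [Real.sin_two_mul, Real.cos_two_mul'] at hcν; nlinarith [hcν]
  have hS : (∫ x in (-1 : ℝ)..0, Real.sin (μ * (1 + x)) * Real.sin (ν * (1 + x)))
      = (Real.sin (μ - ν) / (μ - ν) - Real.sin (μ + ν) / (μ + ν)) / 2 := by
    have : ∀ x : ℝ, Real.sin (μ * (1 + x)) * Real.sin (ν * (1 + x))
        = (Real.cos ((μ - ν) * x + (μ - ν)) - Real.cos ((μ + ν) * x + (μ + ν))) / 2 := by
      intro x
      rw [show (μ - ν) * x + (μ - ν) = μ * (1 + x) - ν * (1 + x) by ring,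
        show (μ + ν) * x + (μ + ν) = μ * (1 + x) + ν * (1 + x) by ring,
        Real.cos_sub, Real.cos_add]
      ring
    simp_rw [this]
    rw [intervalIntegral.integral_div, intervalIntegral.integral_sub,
      int_cos_aux _ hd, int_cos_aux _ hs]
    · exact (Continuous.intervalIntegrable (by fun_prop) _ _)
    · exact (Continuous.intervalIntegrable (by fun_prop) _ _)
  have hC : (∫ x in (0 : ℝ)..1, Real.cos (μ * (x - 1)) * Real.cos (ν * (x - 1)))
      = (Real.sin (μ - ν) / (μ - ν) + Real.sin (μ + ν) / (μ + ν)) / 2 := by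
    have : ∀ x : ℝ, Real.cos (μ * (x - 1)) * Real.cos (ν * (x - 1))
        = (Real.cos ((μ - ν) * x + -(μ - ν)) + Real.cos ((μ + ν) * x + -(μ + ν))) / 2 := by
      intro x
      rw [show (μ - ν) * x + -(μ - ν) = μ * (x - 1) - ν * (x - 1) by ring,
        show (μ + ν) * x + -(μ + ν) = μ * (x - 1) + ν * (x - 1) by ring,
        Real.cos_sub, Real.cos_add]
      ring
    simp_rw [this]
    rw [intervalIntegral.integral_div, intervalIntegral.integral_add,
      int_cos_aux' _ hd, int_cos_aux' _ hs]
    · exact (Continuous.intervalIntegrable (by fun_prop) _ _)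
    · exact (Continuous.intervalIntegrable (by fun_prop) _ _)
  rw [hS, hC, Real.tan_eq_sin_div_cos, Real.tan_eq_sin_div_cos, Real.sin_sub, Real.sin_add]
  field_simp
  linear_combination (2*ν*Real.sin μ*Real.cos μ) * hν' -
    (2*μ*Real.sin ν*Real.cos ν) * hμ'
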